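/- For every positive integer n and every divisor d_1 of the square-free kernel γ(n), one has μ(d_1) ∑_{d | n, d ≠ d_1} μ(d) c_n(∑_{p | d_1} n/p − ∑_{p | d} n/p) = n − φ(n). -/

import Mathlib

open Polynomial Finset

/-- The Ramanujan sum `c_n(r) = ∑_{1 ≤ j ≤ n, gcd(j,n)=1} e^{2πijr/n}`. -/
noncomputable def ramanujanSum (n : ℕ) (r : ℤ) : ℂ :=
  ∑ j ∈ Finset.Icc 1 n, if Nat.gcd j n = 1 then
    Complex.exp (2 * (Real.pi : ℂ) * Complex.I * (j : ℂ) * (r : ℂ) / (n : ℂ)) else 0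

/-! ### Auxiliary machinery -/

/-- `RamIdAux.E n t = e^{2πit/n}`. -/
noncomputable def RamIdAux.E (n : ℕ) (t : ℤ) : ℂ :=
  Complex.exp (2 * (Real.pi : ℂ) * Complex.I * (t : ℂ) / (n : ℂ))

namespace RamIdAux

lemma E_add (n : ℕ) (a b : ℤ) : E n (a + b) = E n a * E n b := by
  rw [E, E, E, ← Complex.exp_add]
  push_cast
  ring_nf

lemma E_dvd (n : ℕ) (hn : 0 < n) (t : ℤ) (h : (n : ℤ) ∣ t) : E n t = 1 := by
  obtain ⟨k, rfl⟩ := h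
  have hn' : (n : ℂ) ≠ 0 := Nat.cast_ne_zero.mpr hn.ne'
  rw [E]
  have : 2 * (Real.pi : ℂ) * Complex.I * ((n : ℤ) * k : ℤ) / n
      = (k : ℂ) * (2 * Real.pi * Complex.I) := by
    push_cast
    field_simp
  rw [this]
  exact Complex.exp_int_mul_two_pi_mul_I k

lemma E_pow (n : ℕ) (j : ℕ) (t : ℤ) : E n ((j : ℤ) * t) = (E n t) ^ j := by
  rw [E, E, ← Complex.exp_nat_mul]
  congr 1
  push_cast
  ring

lemma E_sum {α : Type*} (n : ℕ) (s : Finset α) (f : α → ℤ) :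
    E n (∑ a ∈ s, f a) = ∏ a ∈ s, E n (f a) := by
  classical
  induction s using Finset.induction_on with
  | empty => simp [E]
  | insert _ _ h ih => rw [Finset.sum_insert h, Finset.prod_insert h, E_add, ih]

lemma geom_main (n : ℕ) (hn : 0 < n) (t : ℤ) :
    ∑ j ∈ Icc 1 n, E n ((j : ℤ) * t) = if (n : ℤ) ∣ t then (n : ℂ) else 0 := by
  split_ifs with h
  · rw [Finset.sum_congr rfl (fun j _ => E_dvd n hn _ (Dvd.dvd.mul_left h _))]
    simp [Nat.card_Icc]
  · have hz1 : E n t ≠ 1 := by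
      intro hc
      rw [E, Complex.exp_eq_one_iff] at hc
      obtain ⟨k, hk⟩ := hc
      apply h
      refine ⟨k, ?_⟩
      have hn' : (n : ℂ) ≠ 0 := Nat.cast_ne_zero.mpr hn.ne'
      have h2 : (2 : ℂ) * Real.pi * Complex.I ≠ 0 := by
        simp [Real.pi_ne_zero, Complex.I_ne_zero]
      have : (t : ℂ) = (n : ℂ) * k := by
        have h3 : 2 * (Real.pi : ℂ) * Complex.I * t / n = (k : ℂ) * (2 * Real.pi * Complex.I) := by
          exact_mod_cast hk
        field_simp at h3
        apply mul_left_cancel₀ h2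
        linear_combination (2 * (Real.pi : ℂ) * Complex.I) * h3
      exact_mod_cast this
    have hzn : (E n t) ^ n = 1 := by
      rw [← E_pow]
      exact E_dvd n hn _ ⟨t, by push_cast; ring⟩
    have : ∑ j ∈ Icc 1 n, E n ((j : ℤ) * t) = ∑ j ∈ Finset.range n, (E n t) ^ (1 + j) := by
      rw [← Finset.Ico_add_one_right_eq_Icc, Finset.sum_Ico_eq_sum_range]
      exact Finset.sum_congr rfl fun j _ => by rw [← E_pow]
    rw [this]
    simp only [pow_add, pow_one, ← Finset.mul_sum]
    rw [geom_sum_eq hz1, hzn]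
    simp

lemma squarefree_prod_primes {s : Finset ℕ} (hs : ∀ p ∈ s, p.Prime) :
    Squarefree (∏ p ∈ s, p) := by
  classical
  induction s using Finset.induction_on with
  | empty => simp
  | @insert a s ha ih =>
    rw [Finset.prod_insert ha]
    have hap := hs a (Finset.mem_insert_self a s)
    have hrest := ih fun p hp => hs p (Finset.mem_insert_of_mem hp)
    rw [Nat.squarefree_mul_iff]
    refine ⟨(Nat.Prime.coprime_iff_not_dvd hap).mpr ?_, hap.squarefree, hrest⟩
    intro hdvd
    obtain ⟨q, hq, hpq⟩ := (Nat.Prime.prime hap).exists_mem_finset_dvd hdvd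
    obtain rfl := (Nat.prime_dvd_prime_iff_eq hap (hs q (Finset.mem_insert_of_mem hq))).mp hpq
    exact ha hq

lemma moebius_prod_primes {s : Finset ℕ} (hs : ∀ p ∈ s, p.Prime) :
    ArithmeticFunction.moebius (∏ p ∈ s, p) = (-1) ^ s.card := by
  classical
  induction s using Finset.induction_on with
  | empty => simp
  | @insert a s ha ih =>
    have hap := hs a (Finset.mem_insert_self a s)
    have hrest : ∀ p ∈ s, p.Prime := fun p hp => hs p (Finset.mem_insert_of_mem hp)
    have hcop : Nat.Coprime a (∏ p ∈ s, p) := by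
      refine (Nat.Prime.coprime_iff_not_dvd hap).mpr ?_
      intro hdvd
      obtain ⟨q, hq, hpq⟩ := (Nat.Prime.prime hap).exists_mem_finset_dvd hdvd
      obtain rfl := (Nat.prime_dvd_prime_iff_eq hap (hrest q hq)).mp hpq
      exact ha hq
    rw [Finset.prod_insert ha, ArithmeticFunction.isMultiplicative_moebius.map_mul_of_coprime hcop,
      ArithmeticFunction.moebius_apply_prime hap, ih hrest, Finset.card_insert_of_notMem ha,
      pow_succ]
    ring

lemma sum_divisors_moebius_prod (n : ℕ) (hn : 0 < n) (g : ℕ → ℂ) :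
    ∑ d ∈ n.divisors, (ArithmeticFunction.moebius d : ℂ) * ∏ p ∈ d.primeFactors, g p
      = ∏ p ∈ n.primeFactors, (1 - g p) := by
  classical
  have hfilter : ∑ d ∈ n.divisors, (ArithmeticFunction.moebius d : ℂ) * ∏ p ∈ d.primeFactors, g p
      = ∑ d ∈ n.divisors.filter Squarefree,
          (ArithmeticFunction.moebius d : ℂ) * ∏ p ∈ d.primeFactors, g p := by
    refine (Finset.sum_filter_of_ne ?_).symm
    intro d _ hne
    by_contra hsq
    exact hne (by simp [ArithmeticFunction.moebius_eq_zero_of_not_squarefree hsq])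
  rw [hfilter, Nat.sum_divisors_filter_squarefree hn.ne']
  have htf : (UniqueFactorizationMonoid.normalizedFactors n).toFinset = n.primeFactors := by
    rw [Nat.factors_eq]
    simp
  rw [htf]
  have hexp : ∏ p ∈ n.primeFactors, (1 - g p) = ∏ p ∈ n.primeFactors, (-g p + 1) := by
    apply Finset.prod_congr rfl; intros; ring
  rw [hexp, Finset.prod_add]
  refine Finset.sum_congr rfl fun t ht => ?_
  rw [Finset.mem_powerset] at ht
  have hprimes : ∀ p ∈ t, p.Prime := fun p hp => Nat.prime_of_mem_primeFactors (ht hp)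
  have hval : (t.val.prod : ℕ) = ∏ p ∈ t, p := Finset.prod_val t
  rw [hval, moebius_prod_primes hprimes, Nat.primeFactors_prod hprimes]
  simp only [Finset.prod_const_one, mul_one]
  push_cast
  rw [← Finset.prod_const (-1 : ℂ), ← Finset.prod_mul_distrib]
  exact Finset.prod_congr rfl fun p _ => by ring

lemma stepB (n : ℕ) (hn : 0 < n) (w : ℕ → ℤ)
    (hw : ∀ p ∈ n.primeFactors, w p = ((n / p : ℕ) : ℤ) ∨ w p = -((n / p : ℕ) : ℤ))
    {t : Finset ℕ} (ht : t ⊆ n.primeFactors) (hne : t.Nonempty) :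
    ¬ (n : ℤ) ∣ ∑ p ∈ t, w p := by
  obtain ⟨p, hp⟩ := hne
  have hpP := ht hp
  have hpp : p.Prime := Nat.prime_of_mem_primeFactors hpP
  have hpn : p ∣ n := Nat.dvd_of_mem_primeFactors hpP
  set a := n.factorization p with ha
  have hpa : (p ^ a : ℕ) ∣ n := Nat.ordProj_dvd n p
  have hnotdiv : ¬ (p ^ a : ℕ) ∣ n / p := by
    intro hc
    have : p ^ (a + 1) ∣ n := by
      have := mul_dvd_mul hc (dvd_refl p)
      rwa [Nat.div_mul_cancel hpn, ← pow_succ] at this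
    exact Nat.pow_succ_factorization_not_dvd hn.ne' hpp this
  have hrest : ∀ q ∈ t.erase p, (p ^ a : ℤ) ∣ w q := by
    intro q hq
    have hqp : q ≠ p := Finset.ne_of_mem_erase hq
    have hqP := ht (Finset.mem_of_mem_erase hq)
    have hqq : q.Prime := Nat.prime_of_mem_primeFactors hqP
    have hqn : q ∣ n := Nat.dvd_of_mem_primeFactors hqP
    have hnat : (p ^ a : ℕ) ∣ n / q := by
      have hcop : Nat.Coprime (p ^ a) q :=
        Nat.Coprime.pow_left _ ((Nat.coprime_primes hpp hqq).mpr (Ne.symm hqp))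
      refine hcop.dvd_of_dvd_mul_right ?_
      rwa [Nat.div_mul_cancel hqn]
    have hint : (p : ℤ) ^ a ∣ ((n / q : ℕ) : ℤ) := by exact_mod_cast hnat
    rcases hw q hqP with h | h <;> rw [h]
    · exact hint
    · exact dvd_neg.mpr hint
  intro hdvd
  have hpan : (p : ℤ) ^ a ∣ (n : ℤ) := by exact_mod_cast hpa
  have h1 : (p ^ a : ℤ) ∣ ∑ p ∈ t, w p := dvd_trans hpan hdvd
  rw [← Finset.add_sum_erase t w hp] at h1
  have h2 : (p ^ a : ℤ) ∣ w p := (dvd_add_right (Finset.dvd_sum hrest)).mp (by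
    rwa [add_comm] at h1)
  apply hnotdiv
  rcases hw p hpP with h | h <;> rw [h] at h2
  · exact_mod_cast h2
  · rw [dvd_neg] at h2; exact_mod_cast h2

lemma stepA (n : ℕ) (hn : 0 < n) (w : ℕ → ℤ)
    (hw : ∀ p ∈ n.primeFactors, w p = ((n / p : ℕ) : ℤ) ∨ w p = -((n / p : ℕ) : ℤ)) :
    ∑ j ∈ Icc 1 n, ∏ p ∈ n.primeFactors, (1 - E n ((j : ℤ) * w p)) = (n : ℂ) := by
  classical
  have hexp : ∀ j : ℕ, ∏ p ∈ n.primeFactors, (1 - E n ((j : ℤ) * w p))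
      = ∑ t ∈ n.primeFactors.powerset, (-1 : ℂ) ^ t.card * E n ((j : ℤ) * ∑ p ∈ t, w p) := by
    intro j
    have : ∏ p ∈ n.primeFactors, (1 - E n ((j : ℤ) * w p))
        = ∏ p ∈ n.primeFactors, (-E n ((j : ℤ) * w p) + 1) := by
      apply Finset.prod_congr rfl; intros; ring
    rw [this, Finset.prod_add]
    refine Finset.sum_congr rfl fun t _ => ?_
    rw [Finset.prod_const_one, mul_one, Finset.mul_sum, E_sum,
      ← Finset.prod_const (-1 : ℂ), ← Finset.prod_mul_distrib]
    exact Finset.prod_congr rfl fun p _ => by ring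
  rw [Finset.sum_congr rfl fun j _ => hexp j, Finset.sum_comm]
  have hterm : ∀ t ∈ n.primeFactors.powerset,
      ∑ j ∈ Icc 1 n, (-1 : ℂ) ^ t.card * E n ((j : ℤ) * ∑ p ∈ t, w p)
        = if t = ∅ then (n : ℂ) else 0 := by
    intro t ht
    rw [← Finset.mul_sum, geom_main n hn]
    rcases eq_or_ne t ∅ with rfl | hne
    · simp
    · rw [if_neg hne, if_neg (stepB n hn w hw (Finset.mem_powerset.mp ht)
        (Finset.nonempty_iff_ne_empty.mpr hne)), mul_zero]
  rw [Finset.sum_congr rfl hterm]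
  simp

lemma stepC (n : ℕ) (hn : 0 < n) (w : ℕ → ℤ)
    (hw : ∀ p ∈ n.primeFactors, w p = ((n / p : ℕ) : ℤ) ∨ w p = -((n / p : ℕ) : ℤ))
    (j : ℕ) (hj : Nat.gcd j n ≠ 1) :
    ∏ p ∈ n.primeFactors, (1 - E n ((j : ℤ) * w p)) = 0 := by
  obtain ⟨p, hpp, hpg⟩ := Nat.exists_prime_and_dvd hj
  have hpj : p ∣ j := hpg.trans (Nat.gcd_dvd_left j n)
  have hpn : p ∣ n := hpg.trans (Nat.gcd_dvd_right j n)
  have hpP : p ∈ n.primeFactors := Nat.mem_primeFactors.mpr ⟨hpp, hpn, hn.ne'⟩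
  refine Finset.prod_eq_zero hpP ?_
  have hdvd : (n : ℤ) ∣ (j : ℤ) * ((n / p : ℕ) : ℤ) := by
    obtain ⟨m, rfl⟩ := hpj
    have : ((p * m : ℕ) : ℤ) * ((n / p : ℕ) : ℤ) = (m : ℤ) * ((p * (n / p) : ℕ) : ℤ) := by
      push_cast; ring
    rw [this, Nat.mul_div_cancel' hpn]
    exact Dvd.intro_left _ rfl
  have h1 : E n ((j : ℤ) * w p) = 1 := by
    rcases hw p hpP with h | h <;> rw [h]
    · exact E_dvd n hn _ hdvd
    · rw [mul_neg]
      exact E_dvd n hn _ (dvd_neg.mpr hdvd)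
  rw [h1, sub_self]

lemma stepD (n : ℕ) (hn : 0 < n) (d₁ : ℕ) (hd₁ : d₁ ∣ n) (hsq : Squarefree d₁)
    (w : ℕ → ℤ)
    (hw1 : ∀ p ∈ d₁.primeFactors, w p = ((n / p : ℕ) : ℤ))
    (hw2 : ∀ p ∈ n.primeFactors, p ∉ d₁.primeFactors → w p = -((n / p : ℕ) : ℤ))
    (j : ℕ) :
    (ArithmeticFunction.moebius d₁ : ℂ) *
        (E n ((j : ℤ) * ∑ p ∈ d₁.primeFactors, ((n / p : ℕ) : ℤ)) *
          ∏ p ∈ n.primeFactors, (1 - E n (-((j : ℤ) * ((n / p : ℕ) : ℤ)))))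
      = ∏ p ∈ n.primeFactors, (1 - E n ((j : ℤ) * w p)) := by
  classical
  have hQ : d₁.primeFactors ⊆ n.primeFactors :=
    Nat.primeFactors_mono hd₁ hn.ne'
  have hmu : (ArithmeticFunction.moebius d₁ : ℂ) = (-1 : ℂ) ^ d₁.primeFactors.card := by
    have := moebius_prod_primes (s := d₁.primeFactors)
      (fun p hp => Nat.prime_of_mem_primeFactors hp)
    rw [Nat.prod_primeFactors_of_squarefree hsq] at this
    rw [this]
    push_cast
    ring
  have hEs : E n ((j : ℤ) * ∑ p ∈ d₁.primeFactors, ((n / p : ℕ) : ℤ))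
      = ∏ p ∈ d₁.primeFactors, E n ((j : ℤ) * ((n / p : ℕ) : ℤ)) := by
    rw [Finset.mul_sum, E_sum]
  rw [hmu, hEs, ← Finset.prod_sdiff hQ,
    ← Finset.prod_sdiff hQ (f := fun p => 1 - E n ((j : ℤ) * w p)),
    ← Finset.prod_const (-1 : ℂ)]
  have hout : ∀ p ∈ n.primeFactors \ d₁.primeFactors,
      (1 - E n (-((j : ℤ) * ((n / p : ℕ) : ℤ)))) = (1 - E n ((j : ℤ) * w p)) := by
    intro p hp
    rw [Finset.mem_sdiff] at hp
    rw [hw2 p hp.1 hp.2, mul_neg]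
  have hin : ∀ p ∈ d₁.primeFactors,
      (-1 : ℂ) * (E n ((j : ℤ) * ((n / p : ℕ) : ℤ)) * (1 - E n (-((j : ℤ) * ((n / p : ℕ) : ℤ)))))
        = (1 - E n ((j : ℤ) * w p)) := by
    intro p hp
    rw [hw1 p hp]
    set x := (j : ℤ) * ((n / p : ℕ) : ℤ)
    have hxx : E n x * E n (-x) = 1 := by
      rw [← E_add, add_neg_cancel]
      simpa [E] using Complex.exp_zero
    linear_combination hxx
  rw [← Finset.prod_congr rfl hout, ← Finset.prod_congr rfl hin,
    Finset.prod_mul_distrib, Finset.prod_mul_distrib]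
  ring

lemma totient_Icc (n : ℕ) (hn : 0 < n) :
    ((Icc 1 n).filter fun j => Nat.gcd j n = 1).card = n.totient := by
  classical
  rw [Nat.totient]
  apply Finset.card_bij (fun j _ => j % n)
  · intro a ha
    simp only [Finset.mem_filter, Finset.mem_Icc] at ha
    simp only [Finset.mem_filter, Finset.mem_range]
    refine ⟨Nat.mod_lt _ hn, ?_⟩
    have : Nat.gcd (a % n) n = Nat.gcd a n := by
      rw [Nat.gcd_comm a n, Nat.gcd_rec n a]
    unfold Nat.Coprime
    rw [Nat.gcd_comm, this, ha.2]
  · intro a ha b hb hab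
    simp only [Finset.mem_filter, Finset.mem_Icc] at ha hb
    rcases eq_or_lt_of_le ha.1.2 with h | h
    · rcases eq_or_lt_of_le hb.1.2 with h' | h'
      · omega
      · rw [h, Nat.mod_self, Nat.mod_eq_of_lt h'] at hab
        omega
    · rw [Nat.mod_eq_of_lt h] at hab
      rcases eq_or_lt_of_le hb.1.2 with h' | h'
      · rw [h', Nat.mod_self] at hab
        omega
      · rw [Nat.mod_eq_of_lt h'] at hab
        exact hab
  · intro b hb
    simp only [Finset.mem_filter, Finset.mem_range] at hb
    rcases Nat.eq_zero_or_pos b with rfl | hbpos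
    · have hn1 : n = 1 := by
        have := hb.2
        unfold Nat.Coprime at this
        simpa using this
      refine ⟨n, ?_, ?_⟩
      · simp only [Finset.mem_filter, Finset.mem_Icc]
        exact ⟨⟨hn, le_refl n⟩, by rw [Nat.gcd_self, hn1]⟩
      · simp [Nat.mod_self]
    · refine ⟨b, ?_, ?_⟩
      · simp only [Finset.mem_filter, Finset.mem_Icc]
        refine ⟨⟨hbpos, le_of_lt hb.1⟩, ?_⟩
        have := hb.2
        unfold Nat.Coprime at this
        rw [Nat.gcd_comm] at this
        exact this
      · exact Nat.mod_eq_of_lt hb.1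

end RamIdAux

open RamIdAux

lemma ramanujanSum_eq_E (n : ℕ) (r : ℤ) :
    ramanujanSum n r = ∑ j ∈ Icc 1 n, if Nat.gcd j n = 1 then E n ((j : ℤ) * r) else 0 := by
  refine Finset.sum_congr rfl fun j _ => ?_
  split_ifs with h
  · rw [E]
    congr 1
    push_cast
    ring
  · rfl

lemma ramanujanSum_zero_eq (n : ℕ) (hn : 0 < n) : ramanujanSum n 0 = (n.totient : ℂ) := by
  rw [ramanujanSum_eq_E]
  have : ∀ j ∈ Icc 1 n, (if Nat.gcd j n = 1 then E n ((j : ℤ) * 0) else 0)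
      = (if Nat.gcd j n = 1 then (1 : ℂ) else 0) := by
    intro j _
    split_ifs with h
    · rw [mul_zero]
      exact E_dvd n hn 0 (dvd_zero _)
    · rfl
  rw [Finset.sum_congr rfl this, Finset.sum_boole, totient_Icc n hn]

theorem ramanujan_identity (n : ℕ) (hn : 1 ≤ n) (d₁ : ℕ)
    (hd₁ : d₁ ∣ ∏ p ∈ n.primeFactors, p) :
    (ArithmeticFunction.moebius d₁ : ℂ) *
        ∑ d ∈ n.divisors.erase d₁, (ArithmeticFunction.moebius d : ℂ) *
          ramanujanSum n
            ((∑ p ∈ d₁.primeFactors, ((n / p : ℕ) : ℤ)) -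
              ∑ p ∈ d.primeFactors, ((n / p : ℕ) : ℤ)) =
      (n : ℂ) - (n.totient : ℂ) := by
  classical
  have hn0 : 0 < n := hn
  set s : ℕ → ℤ := fun d => ∑ p ∈ d.primeFactors, ((n / p : ℕ) : ℤ) with hs
  have hd₁n : d₁ ∣ n := hd₁.trans (Nat.prod_primeFactors_dvd n)
  have hsq : Squarefree d₁ :=
    (squarefree_prod_primes fun p hp => Nat.prime_of_mem_primeFactors hp).squarefree_of_dvd hd₁
  have hd₁div : d₁ ∈ n.divisors := Nat.mem_divisors.mpr ⟨hd₁n, hn0.ne'⟩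
  set w : ℕ → ℤ := fun p =>
    if p ∈ d₁.primeFactors then ((n / p : ℕ) : ℤ) else -((n / p : ℕ) : ℤ) with hwdef
  have hw1 : ∀ p ∈ d₁.primeFactors, w p = ((n / p : ℕ) : ℤ) := fun p hp => by
    simp only [hwdef, if_pos hp]
  have hw2 : ∀ p ∈ n.primeFactors, p ∉ d₁.primeFactors → w p = -((n / p : ℕ) : ℤ) :=
    fun p _ hp => by simp only [hwdef, if_neg hp]
  have hw : ∀ p ∈ n.primeFactors, w p = ((n / p : ℕ) : ℤ) ∨ w p = -((n / p : ℕ) : ℤ) := by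
    intro p hpP
    by_cases h : p ∈ d₁.primeFactors
    · exact Or.inl (hw1 p h)
    · exact Or.inr (hw2 p hpP h)
  set F : ℕ → ℂ := fun d => (ArithmeticFunction.moebius d : ℂ) * ramanujanSum n (s d₁ - s d)
    with hF
  have hgoal : (ArithmeticFunction.moebius d₁ : ℂ) * ∑ d ∈ n.divisors.erase d₁, F d =
      (n : ℂ) - (n.totient : ℂ) → (ArithmeticFunction.moebius d₁ : ℂ) *
        ∑ d ∈ n.divisors.erase d₁, (ArithmeticFunction.moebius d : ℂ) *
          ramanujanSum n
            ((∑ p ∈ d₁.primeFactors, ((n / p : ℕ) : ℤ)) -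
              ∑ p ∈ d.primeFactors, ((n / p : ℕ) : ℤ)) =
      (n : ℂ) - (n.totient : ℂ) := fun h => h
  apply hgoal
  rw [Finset.sum_erase_eq_sub hd₁div]
  have hFd₁ : F d₁ = (ArithmeticFunction.moebius d₁ : ℂ) * (n.totient : ℂ) := by
    rw [hF]
    simp only [sub_self]
    rw [ramanujanSum_zero_eq n hn0]
  -- main claim
  have hT : (ArithmeticFunction.moebius d₁ : ℂ) * ∑ d ∈ n.divisors, F d = (n : ℂ) := by
    have h1 : ∀ d ∈ n.divisors, F d = ∑ j ∈ Icc 1 n,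
        if Nat.gcd j n = 1 then
          E n ((j : ℤ) * s d₁) *
            ((ArithmeticFunction.moebius d : ℂ) * E n (-((j : ℤ) * s d))) else 0 := by
      intro d _
      simp only [hF]
      rw [ramanujanSum_eq_E, Finset.mul_sum]
      refine Finset.sum_congr rfl fun j _ => ?_
      rw [mul_ite, mul_zero]
      split_ifs with h
      · have : (j : ℤ) * (s d₁ - s d) = (j : ℤ) * s d₁ + (-((j : ℤ) * s d)) := by ring
        rw [this, E_add]
        ring
      · rfl
    rw [Finset.sum_congr rfl h1, Finset.sum_comm, Finset.mul_sum]
    have h2 : ∀ j ∈ Icc 1 n,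
        (ArithmeticFunction.moebius d₁ : ℂ) * ∑ d ∈ n.divisors,
          (if Nat.gcd j n = 1 then
            E n ((j : ℤ) * s d₁) *
              ((ArithmeticFunction.moebius d : ℂ) * E n (-((j : ℤ) * s d))) else 0)
          = ∏ p ∈ n.primeFactors, (1 - E n ((j : ℤ) * w p)) := by
      intro j _
      have hsd : ∀ d : ℕ, E n (-((j : ℤ) * s d))
          = ∏ p ∈ d.primeFactors, E n (-((j : ℤ) * ((n / p : ℕ) : ℤ))) := by
        intro d
        have harg : -((j : ℤ) * s d)
            = ∑ p ∈ d.primeFactors, -((j : ℤ) * ((n / p : ℕ) : ℤ)) := by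
          rw [hs]
          rw [Finset.mul_sum]
          exact (Finset.sum_neg_distrib _).symm
        rw [harg, E_sum]
      by_cases hc : Nat.gcd j n = 1
      · simp only [if_pos hc]
        have hstep : ∑ d ∈ n.divisors,
            E n ((j : ℤ) * s d₁) * ((ArithmeticFunction.moebius d : ℂ) * E n (-((j : ℤ) * s d)))
            = E n ((j : ℤ) * s d₁) *
              ∏ p ∈ n.primeFactors, (1 - E n (-((j : ℤ) * ((n / p : ℕ) : ℤ)))) := by
          rw [← Finset.mul_sum,
            ← sum_divisors_moebius_prod n hn0 (fun p => E n (-((j : ℤ) * ((n / p : ℕ) : ℤ))))]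
          congr 1
          exact Finset.sum_congr rfl fun d _ => by rw [hsd d]
        rw [hstep]
        exact stepD n hn0 d₁ hd₁n hsq w hw1 hw2 j
      · simp only [if_neg hc]
        rw [Finset.sum_const_zero, mul_zero]
        exact (stepC n hn0 w hw j hc).symm
    rw [Finset.sum_congr rfl h2]
    exact stepA n hn0 w hw
  rw [mul_sub, hT, hFd₁]
  have hsq2 : (ArithmeticFunction.moebius d₁ : ℂ) *
      ((ArithmeticFunction.moebius d₁ : ℂ) * (n.totient : ℂ)) = (n.totient : ℂ) := by
    have h2 : (ArithmeticFunction.moebius d₁ : ℂ) ^ 2 = 1 := by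
      have := ArithmeticFunction.moebius_sq_eq_one_of_squarefree hsq
      exact_mod_cast congrArg (fun z : ℤ => (z : ℂ)) this
    linear_combination (n.totient : ℂ) * h2
  rw [hsq2]
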